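/- Let n ≥ 2 be an even integer and d ≥ 3 an integer with (n, d) ≠ (2, 3). Then χ(d; n) > (n + 1)·d. Moreover, in the excluded case one has equality: χ(3; 2) = 9 = (2 + 1)·3. -/
import Mathlib


/-- `hcomplete k d` is the complete homogeneous symmetric polynomial
`h_k(d₁,…,d_r) = ∑_{i₁+⋯+i_r=k} d₁^{i₁}⋯d_r^{i_r}` evaluated at the tuple `d`. -/
def hcomplete {r : ℕ} (k : ℕ) (d : Fin r → ℤ) : ℤ :=
  ∑ f ∈ Finset.Nat.antidiagonalTuple r k, ∏ j, d j ^ f j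

/-- `chi d n = d₁⋯d_r · ∑_{i=0}^{n} (−1)^{n−i} · binom(n+r+1, i) · h_{n−i}(d₁,…,d_r)`,
which by a theorem of Azuma is the degree of the top Chern class of an `n`-dimensional
smooth complete intersection of hypersurfaces of degrees `d₁,…,d_r` in `ℙ^{n+r}`. -/
def chi {r : ℕ} (d : Fin r → ℤ) (n : ℕ) : ℤ :=
  (∏ j, d j) * ∑ i ∈ Finset.range (n + 1),
    (-1) ^ (n - i) * ((n + r + 1).choose i : ℤ) * hcomplete (n - i) d

lemma hcomplete_one (k : ℕ) (d : ℤ) : hcomplete k ![d] = d ^ k := by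
  simp [hcomplete, Finset.Nat.antidiagonalTuple_one]

lemma chi_one (d : ℤ) (n : ℕ) :
    chi ![d] n = d * ∑ i ∈ Finset.range (n + 1),
      (-1) ^ (n - i) * ((n + 2).choose i : ℤ) * d ^ (n - i) := by
  simp [chi, hcomplete_one]

lemma key (d : ℤ) (n : ℕ) (hn : Even n) :
    d * chi ![d] n = (d - 1) ^ (n + 2) + (n + 2) * d - 1 := by
  have hpow : (d - 1) ^ (n + 2) =
      ∑ k ∈ Finset.range (n + 3), d ^ k * (-1 : ℤ) ^ (n + 2 - k) * ((n + 2).choose k : ℤ) := by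
    have := add_pow d (-1 : ℤ) (n + 2)
    simpa [sub_eq_add_neg] using this
  have hrefl : (d - 1) ^ (n + 2) =
      ∑ i ∈ Finset.range (n + 3),
        d ^ (n + 2 - i) * (-1 : ℤ) ^ i * ((n + 2).choose i : ℤ) := by
    rw [hpow, ← Finset.sum_range_reflect]
    refine Finset.sum_congr rfl fun i hi => ?_
    have hi' : i ≤ n + 2 := Nat.lt_succ_iff.mp (Finset.mem_range.mp hi)
    have e0 : n + 3 - 1 - i = n + 2 - i := by omega
    have h1 : n + 2 - (n + 2 - i) = i := Nat.sub_sub_self hi'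
    have h2 : (n + 2).choose (n + 2 - i) = (n + 2).choose i := Nat.choose_symm hi'
    rw [e0, h1, h2]
  rw [chi_one]
  have hsplit : ∑ i ∈ Finset.range (n + 3),
        d ^ (n + 2 - i) * (-1 : ℤ) ^ i * ((n + 2).choose i : ℤ)
      = (∑ i ∈ Finset.range (n + 1),
          d ^ (n + 2 - i) * (-1 : ℤ) ^ i * ((n + 2).choose i : ℤ))
        + d ^ 1 * (-1 : ℤ) ^ (n + 1) * ((n + 2).choose (n + 1) : ℤ)
        + d ^ 0 * (-1 : ℤ) ^ (n + 2) * ((n + 2).choose (n + 2) : ℤ) := by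
    rw [Finset.sum_range_succ, Finset.sum_range_succ]
    simp
  have hterm : ∀ i ∈ Finset.range (n + 1),
      d ^ (n + 2 - i) * (-1 : ℤ) ^ i * ((n + 2).choose i : ℤ)
        = d * ((-1) ^ (n - i) * ((n + 2).choose i : ℤ) * d ^ (n - i)) * d := by
    intro i hi
    have hi' : i ≤ n := Nat.lt_succ_iff.mp (Finset.mem_range.mp hi)
    have hpe : ((-1 : ℤ)) ^ i = (-1) ^ (n - i) := by
      rcases Nat.even_or_odd i with he | ho
      · rw [he.neg_one_pow,
          Even.neg_one_pow ((Nat.even_sub hi').mpr (iff_of_true hn he))]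
      · rw [ho.neg_one_pow, Odd.neg_one_pow (Nat.Even.sub_odd hi' hn ho)]
    have hde : n + 2 - i = (n - i) + 2 := by omega
    rw [hpe, hde, pow_add]
    ring
  have hne : Even (n + 2) := hn.add (by decide)
  have hch : ((n + 2).choose (n + 1) : ℤ) = (n : ℤ) + 2 := by
    rw [show n + 2 = (n + 1) + 1 from rfl, Nat.choose_succ_self_right]
    push_cast; ring
  rw [hrefl, hsplit, Finset.sum_congr rfl hterm, ← Finset.sum_mul, ← Finset.mul_sum,
    hch, Nat.choose_self, hne.neg_one_pow, Odd.neg_one_pow (by simpa using hn.add_one)]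
  ring

lemma three_pow (n : ℕ) (h : 2 ≤ n) : 2 * (n : ℤ) + 3 ≤ 3 ^ n := by
  induction n, h using Nat.le_induction with
  | base => norm_num
  | succ m hm ih =>
    push_cast
    rw [pow_succ]
    push_cast at ih
    linarith

lemma two_pow (n : ℕ) (h : 4 ≤ n) : 6 * (n : ℤ) + 4 < 2 ^ (n + 2) := by
  induction n, h using Nat.le_induction with
  | base => norm_num
  | succ m hm ih =>
    push_cast
    rw [show m + 1 + 2 = (m + 2) + 1 from rfl, pow_succ]
    push_cast at ih
    linarith

/-- For even `n ≥ 2` and `d ≥ 3` with `(n, d) ≠ (2, 3)` one has `χ(d; n) > (n + 1)·d`;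
moreover in the excluded case there is equality `χ(3; 2) = 9 = (2 + 1)·3`. -/
theorem chi_hypersurface_lower_bound :
    (∀ (n : ℕ) (d : ℤ), 2 ≤ n → Even n → 3 ≤ d → ((n : ℕ), d) ≠ (2, 3) →
      ((n : ℤ) + 1) * d < chi ![d] n) ∧
    chi ![(3 : ℤ)] 2 = 9 ∧ (9 : ℤ) = (2 + 1) * 3 := by
  refine ⟨?_, ?_, by norm_num⟩
  · intro n d hn2 hne hd hexc
    have hk := key d n hne
    have hd0 : (0 : ℤ) < d := by linarith
    rw [← mul_lt_mul_iff_right₀ hd0, hk]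
    rcases eq_or_lt_of_le hd with h3 | h4
    · -- d = 3
      subst h3
      have hn4 : 4 ≤ n := by
        rcases Nat.lt_or_ge n 4 with h | h
        · interval_cases n
          · simp at hexc
          · exact absurd hne (by decide)
        · exact h
      have h2 := two_pow n hn4
      have h2' : (6 : ℤ) * n + 4 < (3 - 1) ^ (n + 2) := by norm_num; linarith
      linarith
    · -- d ≥ 4
      have hd4 : (4 : ℤ) ≤ d := h4
      have hn0 : (0 : ℤ) ≤ (n : ℤ) := Int.natCast_nonneg n
      have h1 : (3 : ℤ) ^ n ≤ (d - 1) ^ n :=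
        pow_le_pow_left₀ (by norm_num) (by linarith) n
      have h2 := three_pow n hn2
      have hq : (0 : ℤ) ≤ d ^ 2 - 4 * d + 2 := by nlinarith
      have e1 : (3 : ℤ) ^ n * (d - 1) ^ 2 ≤ (d - 1) ^ n * (d - 1) ^ 2 :=
        mul_le_mul_of_nonneg_right h1 (sq_nonneg _)
      have e2 : (2 * (n : ℤ) + 3) * (d - 1) ^ 2 ≤ 3 ^ n * (d - 1) ^ 2 :=
        mul_le_mul_of_nonneg_right h2 (sq_nonneg _)
      have e3 : ((n : ℤ) + 1) * d ^ 2 + 9 ≤ (2 * (n : ℤ) + 3) * (d - 1) ^ 2 := by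
        nlinarith [mul_nonneg hn0 hq,
          mul_nonneg (by linarith : (0:ℤ) ≤ d - 4) (by linarith : (0:ℤ) ≤ d)]
      have hp : (0 : ℤ) < ((n : ℤ) + 2) * d := by positivity
      have h3 : (d - 1) ^ (n + 2) = (d - 1) ^ n * (d - 1) ^ 2 := by rw [← pow_add]
      rw [h3]
      nlinarith [e1, e2, e3, hp]
  · have hk := key 3 2 (by decide)
    norm_num at hk
    linarith
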